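/- Let p be a probability mass function on a finite alphabet 𝒳 with Shannon entropy H(X), let X₁,…,Xₙ be i.i.d. with pmf p, and let ε > 0. Then ℙ[ | −(1/n) log₂ p(Xⁿ) − H(X) | > ε ] ≤ e^{n C_X^{(1)}(ε)} + e^{n C_X^{(2)}(ε)}. -/

import Mathlib

open Finset Real
open scoped Classical BigOperators

/-- Shannon entropy (in bits) of a pmf on a finite alphabet, with the convention `0 log 0 = 0`. -/
noncomputable def shannonEntropy {W : Type*} [Fintype W] (q : W → ℝ) : ℝ :=
  - ∑ w, q w * Real.logb 2 (q w)

/-- Probability of an i.i.d. sequence: `p(xⁿ) = ∏ᵢ p(xᵢ)`. -/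
noncomputable def seqProb {W : Type*} (q : W → ℝ) {n : ℕ} (w : Fin n → W) : ℝ :=
  ∏ i, q (w i)

/-- Chernoff exponent `C_X^{(1)}(ε) = inf_{s>0} ( ln 𝔼[p(X)^{−s/ln 2}] − s(H(X)+ε) )`. -/
noncomputable def chernoff1 {W : Type*} [Fintype W] (q : W → ℝ) (ε : ℝ) : ℝ :=
  sInf ((fun s : ℝ =>
    Real.log (∑ w ∈ Finset.univ.filter (fun w => 0 < q w), q w ^ (1 - s / Real.log 2))
      - s * (shannonEntropy q + ε)) '' Set.Ioi 0)

/-- Chernoff exponent `C_X^{(2)}(ε) = inf_{s>0} ( ln 𝔼[p(X)^{s/ln 2}] − s(−H(X)+ε) )`. -/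
noncomputable def chernoff2 {W : Type*} [Fintype W] (q : W → ℝ) (ε : ℝ) : ℝ :=
  sInf ((fun s : ℝ =>
    Real.log (∑ w ∈ Finset.univ.filter (fun w => 0 < q w), q w ^ (1 + s / Real.log 2))
      - s * (-shannonEntropy q + ε)) '' Set.Ioi 0)

lemma seqProb_nonneg {X : Type*} [Fintype X] (p : X → ℝ) (hp : ∀ x, 0 ≤ p x)
    {n : ℕ} (xn : Fin n → X) : 0 ≤ seqProb p xn :=
  Finset.prod_nonneg fun i _ => hp _

lemma sum_seqProb {X : Type*} [Fintype X] (p : X → ℝ) (n : ℕ) :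
    ∑ xn : Fin n → X, seqProb p xn = (∑ x, p x) ^ n := by
  unfold seqProb
  rw [← Fintype.piFinset_univ,
    ← Finset.prod_univ_sum (fun _ : Fin n => (Finset.univ : Finset X)) (fun _ x => p x),
    Finset.prod_const, Finset.card_univ, Fintype.card_fin]

/-- key Chernoff-type bound for one tail. -/
lemma sum_tail_le {X : Type*} [Fintype X] (p : X → ℝ) (hp : ∀ x, 0 ≤ p x)
    {n : ℕ} (E : Finset (Fin n → X)) (r B : ℝ)
    (hE : ∀ xn ∈ E, 0 < seqProb p xn → seqProb p xn ^ (-r) ≤ Real.exp B) :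
    ∑ xn ∈ E, seqProb p xn ≤
      Real.exp B * (∑ x ∈ Finset.univ.filter (fun x => 0 < p x), p x ^ (1 + r)) ^ n := by
  set A : Finset X := Finset.univ.filter (fun x => 0 < p x) with hA
  have hq0 : ∀ xn : Fin n → X, 0 ≤ seqProb p xn := seqProb_nonneg p hp
  have step1 : ∑ xn ∈ E, seqProb p xn
      = ∑ xn ∈ E.filter (fun xn => seqProb p xn ≠ 0), seqProb p xn :=
    (Finset.sum_filter_ne_zero E).symm
  have step2 : ∑ xn ∈ E.filter (fun xn => seqProb p xn ≠ 0), seqProb p xn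
      ≤ ∑ xn ∈ E.filter (fun xn => seqProb p xn ≠ 0),
          Real.exp B * ∏ i, p (xn i) ^ (1 + r) := by
    apply Finset.sum_le_sum
    intro xn hxn
    rw [Finset.mem_filter] at hxn
    have hqpos : 0 < seqProb p xn := lt_of_le_of_ne (hq0 xn) (Ne.symm hxn.2)
    have hsplit : seqProb p xn = seqProb p xn ^ (1 + r) * seqProb p xn ^ (-r) := by
      rw [← Real.rpow_add hqpos]
      norm_num
    have hprod : seqProb p xn ^ (1 + r) = ∏ i, p (xn i) ^ (1 + r) := by
      unfold seqProb
      rw [← Real.finset_prod_rpow _ _ (fun i _ => hp (xn i))]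
    calc seqProb p xn = seqProb p xn ^ (1 + r) * seqProb p xn ^ (-r) := hsplit
      _ ≤ seqProb p xn ^ (1 + r) * Real.exp B := by
          apply mul_le_mul_of_nonneg_left (hE xn hxn.1 hqpos) (Real.rpow_nonneg (hq0 xn) _)
      _ = Real.exp B * ∏ i, p (xn i) ^ (1 + r) := by rw [hprod]; ring
  have step3 : ∑ xn ∈ E.filter (fun xn => seqProb p xn ≠ 0),
          Real.exp B * ∏ i, p (xn i) ^ (1 + r)
      ≤ ∑ xn ∈ Fintype.piFinset (fun _ : Fin n => A),
          Real.exp B * ∏ i, p (xn i) ^ (1 + r) := by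
    apply Finset.sum_le_sum_of_subset_of_nonneg
    · intro xn hxn
      rw [Finset.mem_filter] at hxn
      rw [Fintype.mem_piFinset]
      intro i
      rw [hA, Finset.mem_filter]
      refine ⟨Finset.mem_univ _, ?_⟩
      by_contra hpi
      exact hxn.2 (Finset.prod_eq_zero (Finset.mem_univ i)
        (le_antisymm (not_lt.mp hpi) (hp _)))
    · intro xn _ _
      exact mul_nonneg (Real.exp_pos _).le
        (Finset.prod_nonneg fun i _ => Real.rpow_nonneg (hp _) _)
  have step4 : ∑ xn ∈ Fintype.piFinset (fun _ : Fin n => A),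
          Real.exp B * ∏ i, p (xn i) ^ (1 + r)
      = Real.exp B * (∑ x ∈ A, p x ^ (1 + r)) ^ n := by
    rw [← Finset.mul_sum]
    congr 1
    rw [← Finset.prod_univ_sum (fun _ : Fin n => A) (fun _ x => p x ^ (1 + r))]
    rw [Finset.prod_const, Finset.card_univ, Fintype.card_fin]
  calc ∑ xn ∈ E, seqProb p xn
      = _ := step1
    _ ≤ _ := step2
    _ ≤ _ := step3
    _ = _ := step4

lemma le_exp_n_sInf (a : ℝ) (n : ℕ) (hn : 0 < n) (S : Set ℝ) (hS : S.Nonempty)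
    (h : ∀ b ∈ S, a ≤ Real.exp ((n : ℝ) * b)) : a ≤ Real.exp ((n : ℝ) * sInf S) := by
  rcases le_or_gt a 0 with ha | ha
  · exact ha.trans (Real.exp_pos _).le
  · have hnn : (0:ℝ) < n := by exact_mod_cast hn
    have hle : Real.log a / n ≤ sInf S := by
      apply le_csInf hS
      intro b hb
      have := h b hb
      rw [div_le_iff₀ hnn]
      calc Real.log a ≤ Real.log (Real.exp ((n:ℝ) * b)) := Real.log_le_log ha this
        _ = (n:ℝ) * b := Real.log_exp _
        _ = b * n := by ring
    calc a = Real.exp (Real.log a) := (Real.exp_log ha).symm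
      _ ≤ Real.exp ((n:ℝ) * sInf S) := by
          apply Real.exp_le_exp.mpr
          rw [div_le_iff₀ hnn] at hle
          linarith [hle]

/-- For i.i.d. `X₁,…,Xₙ` with pmf `p` and `ε > 0`,
`ℙ[ | −(1/n) log₂ p(Xⁿ) − H(X) | > ε ] ≤ e^{n C_X^{(1)}(ε)} + e^{n C_X^{(2)}(ε)}`. -/
theorem atypicality_probability_bound
    {X : Type*} [Fintype X] (p : X → ℝ)
    (hp : ∀ x, 0 ≤ p x) (hsum : ∑ x, p x = 1)
    (n : ℕ) (ε : ℝ) (hε : 0 < ε) :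
    ∑ xn ∈ Finset.univ.filter (fun xn : Fin n → X =>
        |(-(1 / (n : ℝ))) * Real.logb 2 (seqProb p xn) - shannonEntropy p| > ε),
      seqProb p xn
    ≤ Real.exp ((n : ℝ) * chernoff1 p ε) + Real.exp ((n : ℝ) * chernoff2 p ε) := by
  have hq0 : ∀ xn : Fin n → X, 0 ≤ seqProb p xn := seqProb_nonneg p hp
  set H := shannonEntropy p with hH
  set A : Finset X := Finset.univ.filter (fun x => 0 < p x) with hA
  -- A is nonempty, so the sums inside the logs are positive
  have hAne : A.Nonempty := by
    by_contra hem
    rw [Finset.not_nonempty_iff_eq_empty] at hem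
    have : ∑ x, p x = 0 := by
      apply Finset.sum_eq_zero
      intro x _
      by_contra hx
      have hx' : 0 < p x := lt_of_le_of_ne (hp x) (Ne.symm hx)
      have : x ∈ A := by rw [hA, Finset.mem_filter]; exact ⟨Finset.mem_univ _, hx'⟩
      rw [hem] at this
      exact absurd this (Finset.notMem_empty x)
    rw [this] at hsum; norm_num at hsum
  have hApos : ∀ t : ℝ, 0 < ∑ x ∈ A, p x ^ t := by
    intro t
    apply Finset.sum_pos
    · intro x hx
      rw [hA, Finset.mem_filter] at hx
      exact Real.rpow_pos_of_pos hx.2 t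
    · exact hAne
  have hlog2 : (0:ℝ) < Real.log 2 := Real.log_pos (by norm_num)
  -- case n = 0
  rcases Nat.eq_zero_or_pos n with hn | hn
  · subst hn
    have h1 : ∑ xn ∈ Finset.univ.filter (fun xn : Fin 0 → X =>
        |(-(1 / ((0:ℕ) : ℝ))) * Real.logb 2 (seqProb p xn) - H| > ε), seqProb p xn
        ≤ ∑ xn : Fin 0 → X, seqProb p xn := by
      apply Finset.sum_le_sum_of_subset_of_nonneg (Finset.filter_subset _ _)
      intro xn _ _; exact hq0 xn
    have h2 : ∑ xn : Fin 0 → X, seqProb p xn = 1 := by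
      rw [sum_seqProb p 0]; norm_num
    have h3 : (1:ℝ) ≤ Real.exp (((0:ℕ):ℝ) * chernoff1 p ε) + Real.exp (((0:ℕ):ℝ) * chernoff2 p ε) := by
      norm_num
    exact (h1.trans h2.le).trans h3
  -- main case n ≥ 1
  have hnn : (0:ℝ) < n := by exact_mod_cast hn
  set v : (Fin n → X) → ℝ := fun xn => (-(1 / (n : ℝ))) * Real.logb 2 (seqProb p xn) - H with hv
  -- split event
  have hsplit : Finset.univ.filter (fun xn : Fin n → X => |v xn| > ε)
      = Finset.univ.filter (fun xn => ε < v xn) ∪ Finset.univ.filter (fun xn => ε < -v xn) := by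
    rw [← Finset.filter_or]
    apply Finset.filter_congr
    intro xn _
    simp only [gt_iff_lt, lt_abs]
  have hdisj : Disjoint (Finset.univ.filter (fun xn : Fin n → X => ε < v xn))
      (Finset.univ.filter (fun xn => ε < -v xn)) := by
    rw [Finset.disjoint_filter]
    intro xn _ h1 h2
    linarith
  -- tail 1 bound: for each s > 0
  have tail1 : ∀ s : ℝ, s ∈ Set.Ioi (0:ℝ) →
      ∑ xn ∈ Finset.univ.filter (fun xn : Fin n → X => ε < v xn), seqProb p xn
      ≤ Real.exp ((n:ℝ) * (Real.log (∑ x ∈ A, p x ^ (1 - s / Real.log 2)) - s * (H + ε))) := by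
    intro s hs
    rw [Set.mem_Ioi] at hs
    have key := sum_tail_le p hp (Finset.univ.filter (fun xn : Fin n → X => ε < v xn))
      (-(s / Real.log 2)) ((n:ℝ) * (-(s * (H + ε)))) ?_
    · have h1r : 1 + -(s / Real.log 2) = 1 - s / Real.log 2 := by ring
      rw [h1r] at key
      calc _ ≤ _ := key
        _ = Real.exp ((n:ℝ) * (Real.log (∑ x ∈ A, p x ^ (1 - s / Real.log 2)) - s * (H + ε))) := by
            rw [show (n:ℝ) * (Real.log (∑ x ∈ A, p x ^ (1 - s / Real.log 2)) - s * (H + ε))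
                = (n:ℝ) * (-(s * (H + ε))) + (n:ℝ) * Real.log (∑ x ∈ A, p x ^ (1 - s / Real.log 2))
                from by ring,
              Real.exp_add, Real.exp_nat_mul, Real.exp_nat_mul, Real.exp_log (hApos _)]
    · intro xn hxn hqpos
      rw [Finset.mem_filter] at hxn
      have hev : ε < v xn := hxn.2
      rw [hv] at hev
      simp only at hev
      -- from event : log q < -(n (H+ε)) * log 2
      have hlogq : Real.log (seqProb p xn) < -((n:ℝ) * (H + ε)) * Real.log 2 := by
        have h1 : H + ε < (-(1 / (n : ℝ))) * Real.logb 2 (seqProb p xn) := by linarith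
        rw [Real.logb] at h1
        rw [show (-(1 / (n:ℝ))) * (Real.log (seqProb p xn) / Real.log 2)
            = -(Real.log (seqProb p xn) / Real.log 2 / n) from by ring] at h1
        have h2a : Real.log (seqProb p xn) / Real.log 2 / n < -(H + ε) := by linarith
        have h2b := (div_lt_iff₀ hnn).mp h2a
        have h2 : Real.log (seqProb p xn) / Real.log 2 < -((n:ℝ) * (H + ε)) := by nlinarith
        have := mul_lt_mul_of_pos_right h2 hlog2
        rwa [div_mul_cancel₀ _ hlog2.ne'] at this
      rw [neg_neg, Real.rpow_def_of_pos hqpos]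
      apply Real.exp_le_exp.mpr
      have hs2 : 0 < s / Real.log 2 := div_pos hs hlog2
      calc Real.log (seqProb p xn) * (s / Real.log 2)
          ≤ (-((n:ℝ) * (H + ε)) * Real.log 2) * (s / Real.log 2) := by
            exact mul_le_mul_of_nonneg_right hlogq.le hs2.le
        _ = (n:ℝ) * (-(s * (H + ε))) := by field_simp
  -- tail 2 bound
  have tail2 : ∀ s : ℝ, s ∈ Set.Ioi (0:ℝ) →
      ∑ xn ∈ Finset.univ.filter (fun xn : Fin n → X => ε < -v xn), seqProb p xn
      ≤ Real.exp ((n:ℝ) * (Real.log (∑ x ∈ A, p x ^ (1 + s / Real.log 2)) - s * (-H + ε))) := by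
    intro s hs
    rw [Set.mem_Ioi] at hs
    have key := sum_tail_le p hp (Finset.univ.filter (fun xn : Fin n → X => ε < -v xn))
      (s / Real.log 2) ((n:ℝ) * (-(s * (-H + ε)))) ?_
    · calc _ ≤ _ := key
        _ = Real.exp ((n:ℝ) * (Real.log (∑ x ∈ A, p x ^ (1 + s / Real.log 2)) - s * (-H + ε))) := by
            rw [show (n:ℝ) * (Real.log (∑ x ∈ A, p x ^ (1 + s / Real.log 2)) - s * (-H + ε))
                = (n:ℝ) * (-(s * (-H + ε))) + (n:ℝ) * Real.log (∑ x ∈ A, p x ^ (1 + s / Real.log 2))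
                from by ring,
              Real.exp_add, Real.exp_nat_mul, Real.exp_nat_mul, Real.exp_log (hApos _)]
    · intro xn hxn hqpos
      rw [Finset.mem_filter] at hxn
      have hev : ε < -v xn := hxn.2
      rw [hv] at hev
      simp only at hev
      have hlogq : ((n:ℝ) * (-H + ε)) * Real.log 2 < Real.log (seqProb p xn) := by
        have h1 : -H + ε < (1 / (n : ℝ)) * Real.logb 2 (seqProb p xn) := by linarith
        rw [Real.logb] at h1
        rw [show ((1 / (n:ℝ))) * (Real.log (seqProb p xn) / Real.log 2)
            = Real.log (seqProb p xn) / Real.log 2 / n from by ring] at h1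
        have h2b := (lt_div_iff₀ hnn).mp h1
        have h2 : ((n:ℝ) * (-H + ε)) < Real.log (seqProb p xn) / Real.log 2 := by nlinarith
        have := mul_lt_mul_of_pos_right h2 hlog2
        rwa [div_mul_cancel₀ _ hlog2.ne'] at this
      rw [Real.rpow_def_of_pos hqpos]
      apply Real.exp_le_exp.mpr
      have hs2 : 0 < s / Real.log 2 := div_pos hs hlog2
      calc Real.log (seqProb p xn) * (-(s / Real.log 2))
          = -(Real.log (seqProb p xn)) * (s / Real.log 2) := by ring
        _ ≤ -(((n:ℝ) * (-H + ε)) * Real.log 2) * (s / Real.log 2) := by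
            apply mul_le_mul_of_nonneg_right _ hs2.le
            linarith
        _ = (n:ℝ) * (-(s * (-H + ε))) := by field_simp
  -- combine with sInf
  have hne1 : ((fun s : ℝ =>
      Real.log (∑ w ∈ A, p w ^ (1 - s / Real.log 2)) - s * (H + ε)) '' Set.Ioi 0).Nonempty :=
    ⟨_, ⟨1, by norm_num, rfl⟩⟩
  have hne2 : ((fun s : ℝ =>
      Real.log (∑ w ∈ A, p w ^ (1 + s / Real.log 2)) - s * (-H + ε)) '' Set.Ioi 0).Nonempty :=
    ⟨_, ⟨1, by norm_num, rfl⟩⟩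
  have hC1 : ∑ xn ∈ Finset.univ.filter (fun xn : Fin n → X => ε < v xn), seqProb p xn
      ≤ Real.exp ((n:ℝ) * chernoff1 p ε) := by
    apply le_exp_n_sInf _ n hn _ hne1
    rintro b ⟨s, hs, rfl⟩
    exact tail1 s hs
  have hC2 : ∑ xn ∈ Finset.univ.filter (fun xn : Fin n → X => ε < -v xn), seqProb p xn
      ≤ Real.exp ((n:ℝ) * chernoff2 p ε) := by
    apply le_exp_n_sInf _ n hn _ hne2
    rintro b ⟨s, hs, rfl⟩
    exact tail2 s hs
  calc ∑ xn ∈ Finset.univ.filter (fun xn : Fin n → X => |v xn| > ε), seqProb p xn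
      = ∑ xn ∈ Finset.univ.filter (fun xn : Fin n → X => ε < v xn), seqProb p xn
        + ∑ xn ∈ Finset.univ.filter (fun xn : Fin n → X => ε < -v xn), seqProb p xn := by
        rw [hsplit, Finset.sum_union hdisj]
    _ ≤ _ := add_le_add hC1 hC2
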